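/- arXiv:2512.16121 — 4 statements merged into one kernel-verified Lean document; each statement's English description precedes it below -/
import Mathlib

section
/- Let T > 0, let g : ℝ → ℝ be continuous with g(x) → −∞ as x → ∞, and let y, b : [0,T] → ℝ be differentiable on [0,T] with y(0) = y₀ and y'(t) = g(y(t)) + b'(t) for every t ∈ [0,T]. Suppose there exist constants N₀ ≥ 0 and N₁ ≥ 0 such that b(t₂) − b(t₁) ≤ N₀ + N₁(t₂ − t₁) for all 0 ≤ t₁ < t₂ ≤ T, and suppose ξ* ∈ ℝ is such that g(ξ) ≤ −N₁ for all ξ ≥ ξ*. Then y(t) ≤ max{y₀, ξ*} + N₀ for all t ∈ [0,T]. -/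
/-- **Zlotnik's inequality** (Lemma 2.8). Let `T > 0`, `g : ℝ → ℝ` continuous with
`g(x) → −∞` as `x → ∞`, and `y, b` differentiable on `[0,T]` with `y 0 = y₀` and
`y' t = g (y t) + b' t` on `[0,T]`. If `b t₂ - b t₁ ≤ N₀ + N₁ (t₂ - t₁)` for all
`0 ≤ t₁ < t₂ ≤ T` with `N₀, N₁ ≥ 0`, and `g ξ ≤ -N₁` for all `ξ ≥ ξ*`, then
`y t ≤ max y₀ ξ* + N₀` on `[0,T]`. -/
theorem zlotnik_inequality
    (T : ℝ) (hT : 0 < T)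
    (g : ℝ → ℝ) (hg : Continuous g)
    (hg_top : Filter.Tendsto g Filter.atTop Filter.atBot)
    (y b y' b' : ℝ → ℝ) (y₀ : ℝ)
    (hy : ∀ t ∈ Set.Icc (0 : ℝ) T, HasDerivWithinAt y (y' t) (Set.Icc (0 : ℝ) T) t)
    (hb : ∀ t ∈ Set.Icc (0 : ℝ) T, HasDerivWithinAt b (b' t) (Set.Icc (0 : ℝ) T) t)
    (hy0 : y 0 = y₀)
    (hode : ∀ t ∈ Set.Icc (0 : ℝ) T, y' t = g (y t) + b' t)
    (N₀ N₁ : ℝ) (hN₀ : 0 ≤ N₀) (hN₁ : 0 ≤ N₁)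
    (hbgrowth : ∀ t₁ t₂ : ℝ, 0 ≤ t₁ → t₁ < t₂ → t₂ ≤ T →
      b t₂ - b t₁ ≤ N₀ + N₁ * (t₂ - t₁))
    (ξs : ℝ) (hξs : ∀ ξ : ℝ, ξs ≤ ξ → g ξ ≤ -N₁) :
    ∀ t ∈ Set.Icc (0 : ℝ) T, y t ≤ max y₀ ξs + N₀ := by
  intro t ht
  by_contra hcon
  push_neg at hcon
  set M := max y₀ ξs with hM
  have hycont : ContinuousOn y (Set.Icc 0 T) := fun s hs => (hy s hs).continuousWithinAt
  have hbcont : ContinuousOn b (Set.Icc 0 T) := fun s hs => (hb s hs).continuousWithinAt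
  obtain ⟨ht0, htT⟩ := ht
  set S : Set ℝ := Set.Icc 0 t ∩ y ⁻¹' Set.Iic M with hSdef
  have h0S : (0:ℝ) ∈ S := ⟨⟨le_refl 0, ht0⟩, by simp [hy0, hM]⟩
  have hSsub : S ⊆ Set.Icc 0 t := Set.inter_subset_left
  have hSclosed : IsClosed S :=
    (hycont.mono (Set.Icc_subset_Icc_right htT)).preimage_isClosed_of_isClosed
      isClosed_Icc (isClosed_Iic (a := M))
  have hScomp : IsCompact S := (isCompact_Icc).of_isClosed_subset hSclosed hSsub
  set t₁ := sSup S with ht₁def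
  have ht₁S : t₁ ∈ S := hScomp.sSup_mem ⟨0, h0S⟩
  have ht₁0 : 0 ≤ t₁ := ht₁S.1.1
  have ht₁t : t₁ ≤ t := ht₁S.1.2
  have hyt₁ : y t₁ ≤ M := ht₁S.2
  have ht₁lt : t₁ < t := by
    rcases lt_or_eq_of_le ht₁t with h | h
    · exact h
    · exfalso; rw [h] at hyt₁; linarith [le_max_left y₀ ξs]
  have hbig : ∀ x ∈ Set.Ioc t₁ t, M < y x := by
    intro x hx
    by_contra hle
    push_neg at hle
    have hxS : x ∈ S := ⟨⟨le_trans ht₁0 hx.1.le, hx.2⟩, hle⟩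
    have : x ≤ t₁ := le_csSup (isCompact_Icc.bddAbove.mono hSsub) hxS
    linarith [hx.1]
  set φ : ℝ → ℝ := fun s => y s - b s + s * N₁ with hφdef
  have hder : ∀ x ∈ Set.Ioo t₁ t, HasDerivAt φ (y' x - b' x + N₁) x := by
    intro x hx
    have hx0T : x ∈ Set.Icc (0:ℝ) T :=
      ⟨(lt_of_le_of_lt ht₁0 hx.1).le, le_trans hx.2.le htT⟩
    have hnhds : Set.Icc (0:ℝ) T ∈ nhds x :=
      Icc_mem_nhds (lt_of_le_of_lt ht₁0 hx.1) (lt_of_lt_of_le hx.2 htT)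
    have h1 : HasDerivAt y (y' x) x := (hy x hx0T).hasDerivAt hnhds
    have h2 : HasDerivAt b (b' x) x := (hb x hx0T).hasDerivAt hnhds
    exact (h1.sub h2).add (hasDerivAt_mul_const N₁)
  have hanti : AntitoneOn φ (Set.Icc t₁ t) := by
    apply antitoneOn_of_deriv_nonpos (convex_Icc t₁ t)
    · apply ContinuousOn.add
      · exact ((hycont.mono (Set.Icc_subset_Icc ht₁0 htT)).sub
          (hbcont.mono (Set.Icc_subset_Icc ht₁0 htT)))
      · exact (continuous_id.mul continuous_const).continuousOn
    · rw [interior_Icc]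
      intro x hx
      exact (hder x hx).differentiableAt.differentiableWithinAt
    · rw [interior_Icc]
      intro x hx
      have hx0T : x ∈ Set.Icc (0:ℝ) T :=
        ⟨(lt_of_le_of_lt ht₁0 hx.1).le, le_trans hx.2.le htT⟩
      have hd := (hder x hx).deriv
      rw [hd, hode x hx0T]
      have hgy : g (y x) ≤ -N₁ := by
        apply hξs
        have := hbig x ⟨hx.1, hx.2.le⟩
        calc ξs ≤ M := le_max_right y₀ ξs
        _ ≤ y x := this.le
      linarith
  have hineq : φ t ≤ φ t₁ :=
    hanti (Set.left_mem_Icc.mpr ht₁t) (Set.right_mem_Icc.mpr ht₁t) ht₁t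
  have hgrow := hbgrowth t₁ t ht₁0 ht₁lt htT
  simp only [hφdef] at hineq
  have : y t ≤ M + N₀ := by nlinarith
  linarith
end

section
/- Let A > 0, γ > 1, 0 < ρ̲ ≤ ρ̄ and M ≥ ρ̄. Define G(ρ, ρ_s) = (A/(γ−1)) · ρ · (ρ^{γ−1} − ρ_s^{γ−1}) + A ρ_s^{γ−1} (ρ_s − ρ). Then there exists a constant C > 0, depending only on A, γ, ρ̲, ρ̄ and M, such that for all ρ_s ∈ [ρ̲, ρ̄] and all ρ ∈ [0, M], C^{−1} (ρ − ρ_s)² ≤ G(ρ, ρ_s) ≤ C (ρ − ρ_s)². -/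
open Real intervalIntegral

/-- Two-sided slope bound for `x ↦ x ^ p`. -/
lemma slope_aux {p ρlow M : ℝ} (hp : 0 < p) (h0 : 0 < ρlow) :
    ∀ a b : ℝ, 0 ≤ a → a ≤ b → ρlow ≤ b → b ≤ M →
      min (ρlow ^ (p - 1)) (p * M ^ (p - 1)) * (b - a) ≤ b ^ p - a ^ p ∧
        b ^ p - a ^ p ≤ max (ρlow ^ (p - 1)) (p * M ^ (p - 1)) * (b - a) := by
  intro a b ha hab hlb hbM
  have hb : 0 < b := lt_of_lt_of_le h0 hlb
  have hM : 0 < M := lt_of_lt_of_le hb hbM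
  have hba : 0 ≤ b - a := by linarith
  -- b ^ p = b * b ^ (p-1), a ^ p = a * a ^ (p-1)
  have hbp : b ^ p = b * b ^ (p - 1) := by
    have h := Real.rpow_add hb 1 (p - 1)
    rw [show (1 : ℝ) + (p - 1) = p from by ring, Real.rpow_one] at h
    exact h
  have hap : a ^ p = a * a ^ (p - 1) := by
    have h := Real.rpow_add' ha (y := 1) (z := p - 1)
      (by rw [show (1 : ℝ) + (p - 1) = p from by ring]; exact hp.ne')
    rw [show (1 : ℝ) + (p - 1) = p from by ring, Real.rpow_one] at h
    exact h
  -- Bernoulli bound: relates b^p - a^p with p * b^(p-1) * (b - a)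
  have hdiv : (a / b) ^ p = a ^ p / b ^ p := Real.div_rpow ha hb.le p
  have hs : (-1 : ℝ) ≤ a / b - 1 := by
    have : 0 ≤ a / b := div_nonneg ha hb.le
    linarith
  have key : 1 + (a / b - 1) = a / b := by ring
  have hbpos : 0 < b ^ p := Real.rpow_pos_of_pos hb p
  have hb1pos : 0 < b ^ (p - 1) := Real.rpow_pos_of_pos hb (p - 1)
  have hmulid : (a / b - 1) * b ^ p = (a - b) * b ^ (p - 1) := by
    rw [hbp]; field_simp
  rcases le_total 1 p with h1p | hp1
  · -- p ≥ 1 case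
    -- lower: a^p ≤ a * b^(p-1)
    have h1 : a ^ (p - 1) ≤ b ^ (p - 1) := Real.rpow_le_rpow ha hab (by linarith)
    have hlow : b ^ (p - 1) * (b - a) ≤ b ^ p - a ^ p := by
      have : a ^ p ≤ a * b ^ (p - 1) := by
        rw [hap]
        exact mul_le_mul_of_nonneg_left h1 ha
      nlinarith [hbp]
    have hρb : ρlow ^ (p - 1) ≤ b ^ (p - 1) :=
      Real.rpow_le_rpow h0.le hlb (by linarith)
    -- upper: Bernoulli
    have hbern := one_add_mul_self_le_rpow_one_add hs h1p
    rw [key, hdiv] at hbern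
    have hupp : b ^ p - a ^ p ≤ p * b ^ (p - 1) * (b - a) := by
      have := mul_le_mul_of_nonneg_right hbern hbpos.le
      rw [div_mul_cancel₀ _ hbpos.ne'] at this
      nlinarith [hmulid]
    have hbM' : b ^ (p - 1) ≤ M ^ (p - 1) := Real.rpow_le_rpow hb.le hbM (by linarith)
    constructor
    · calc min (ρlow ^ (p - 1)) (p * M ^ (p - 1)) * (b - a)
          ≤ ρlow ^ (p - 1) * (b - a) := mul_le_mul_of_nonneg_right (min_le_left _ _) hba
        _ ≤ b ^ (p - 1) * (b - a) := mul_le_mul_of_nonneg_right hρb hba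
        _ ≤ b ^ p - a ^ p := hlow
    · calc b ^ p - a ^ p ≤ p * b ^ (p - 1) * (b - a) := hupp
        _ ≤ p * M ^ (p - 1) * (b - a) := by
            apply mul_le_mul_of_nonneg_right _ hba
            exact mul_le_mul_of_nonneg_left hbM' hp.le
        _ ≤ max (ρlow ^ (p - 1)) (p * M ^ (p - 1)) * (b - a) :=
            mul_le_mul_of_nonneg_right (le_max_right _ _) hba
  · -- p ≤ 1 case
    -- upper: a^p ≥ a * b^(p-1)
    have h1 : a * b ^ (p - 1) ≤ a ^ p := by
      rcases eq_or_lt_of_le ha with h | ha'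
      · simp [← h, Real.zero_rpow hp.ne']
      · have : b ^ (p - 1) ≤ a ^ (p - 1) :=
          Real.rpow_le_rpow_of_nonpos ha' hab (by linarith)
        rw [hap]
        exact mul_le_mul_of_nonneg_left this ha'.le
    have hupp : b ^ p - a ^ p ≤ b ^ (p - 1) * (b - a) := by nlinarith [hbp]
    have hρb : b ^ (p - 1) ≤ ρlow ^ (p - 1) :=
      Real.rpow_le_rpow_of_nonpos h0 hlb (by linarith)
    -- lower: reverse Bernoulli
    have hbern := rpow_one_add_le_one_add_mul_self hs hp.le hp1
    rw [key, hdiv] at hbern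
    have hlow : p * b ^ (p - 1) * (b - a) ≤ b ^ p - a ^ p := by
      have := mul_le_mul_of_nonneg_right hbern hbpos.le
      rw [div_mul_cancel₀ _ hbpos.ne'] at this
      nlinarith [hmulid]
    have hbM' : M ^ (p - 1) ≤ b ^ (p - 1) :=
      Real.rpow_le_rpow_of_nonpos hb hbM (by linarith)
    constructor
    · calc min (ρlow ^ (p - 1)) (p * M ^ (p - 1)) * (b - a)
          ≤ p * M ^ (p - 1) * (b - a) := mul_le_mul_of_nonneg_right (min_le_right _ _) hba
        _ ≤ p * b ^ (p - 1) * (b - a) := by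
            apply mul_le_mul_of_nonneg_right _ hba
            exact mul_le_mul_of_nonneg_left hbM' hp.le
        _ ≤ b ^ p - a ^ p := hlow
    · calc b ^ p - a ^ p ≤ b ^ (p - 1) * (b - a) := hupp
        _ ≤ ρlow ^ (p - 1) * (b - a) := mul_le_mul_of_nonneg_right hρb hba
        _ ≤ max (ρlow ^ (p - 1)) (p * M ^ (p - 1)) * (b - a) :=
            mul_le_mul_of_nonneg_right (le_max_left _ _) hba

lemma integral_linear₁ (c a b : ℝ) : ∫ t in a..b, c * (t - a) = c * (b - a) ^ 2 / 2 := by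
  rw [intervalIntegral.integral_const_mul,
    intervalIntegral.integral_sub intervalIntegrable_id (intervalIntegrable_const),
    integral_id, intervalIntegral.integral_const, smul_eq_mul]
  ring

lemma integral_linear₂ (c a b : ℝ) : ∫ t in a..b, c * (b - t) = c * (b - a) ^ 2 / 2 := by
  rw [intervalIntegral.integral_const_mul,
    intervalIntegral.integral_sub intervalIntegrable_const intervalIntegrable_id,
    integral_id, intervalIntegral.integral_const, smul_eq_mul]
  ring

/-- Inequality (1.14): the potential energy density
`G(ρ, ρ_s) = (A/(γ−1)) ρ (ρ^{γ−1} − ρ_s^{γ−1}) + A ρ_s^{γ−1} (ρ_s − ρ)`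
is comparable to `(ρ − ρ_s)²`, uniformly for `ρ_s ∈ [ρ̲, ρ̄]` and `ρ ∈ [0, M]`,
with a constant depending only on `A, γ, ρ̲, ρ̄, M`. -/
theorem potential_energy_density_comparable
    (A γ ρlow ρbar M : ℝ) (hA : 0 < A) (hγ : 1 < γ)
    (hρlow : 0 < ρlow) (hle : ρlow ≤ ρbar) (hM : ρbar ≤ M) :
    ∃ C : ℝ, 0 < C ∧
      ∀ ρs ∈ Set.Icc ρlow ρbar, ∀ ρ ∈ Set.Icc (0 : ℝ) M,
        C⁻¹ * (ρ - ρs) ^ 2 ≤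
            A / (γ - 1) * ρ * (ρ ^ (γ - 1) - ρs ^ (γ - 1)) + A * ρs ^ (γ - 1) * (ρs - ρ) ∧
          A / (γ - 1) * ρ * (ρ ^ (γ - 1) - ρs ^ (γ - 1)) + A * ρs ^ (γ - 1) * (ρs - ρ) ≤
            C * (ρ - ρs) ^ 2 := by
  have hp : 0 < γ - 1 := by linarith
  have hM0 : 0 < M := lt_of_lt_of_le hρlow (hle.trans hM)
  set c₁ : ℝ := min (ρlow ^ (γ - 1 - 1)) ((γ - 1) * M ^ (γ - 1 - 1)) with hc₁def
  set c₂ : ℝ := max (ρlow ^ (γ - 1 - 1)) ((γ - 1) * M ^ (γ - 1 - 1)) with hc₂def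
  have hc₁ : 0 < c₁ :=
    lt_min (Real.rpow_pos_of_pos hρlow _) (mul_pos hp (Real.rpow_pos_of_pos hM0 _))
  have hc₂ : 0 < c₂ := hc₁.trans_le (min_le_max)
  set K₁ : ℝ := A * γ * c₁ / (2 * (γ - 1)) with hK₁def
  set K₂ : ℝ := A * γ * c₂ / (2 * (γ - 1)) with hK₂def
  have hγ0 : 0 < γ := by linarith
  have hK₁ : 0 < K₁ := by positivity
  have hK₂ : 0 < K₂ := by positivity
  refine ⟨max K₂ K₁⁻¹, lt_of_lt_of_le hK₂ (le_max_left _ _), ?_⟩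
  intro ρs hρs ρ hρ
  obtain ⟨hs1, hs2⟩ := hρs
  obtain ⟨hr0, hrM⟩ := hρ
  have hρs0 : 0 < ρs := lt_of_lt_of_le hρlow hs1
  have hρsM : ρs ≤ M := hs2.trans hM
  have hco : 0 < A * γ / (γ - 1) := by positivity
  -- integral representation
  have hint : (∫ t in ρs..ρ, (t ^ (γ - 1) - ρs ^ (γ - 1)))
      = (ρ ^ γ - ρs ^ γ) / γ - ρs ^ (γ - 1) * (ρ - ρs) := by
    rw [intervalIntegral.integral_sub
        (intervalIntegral.intervalIntegrable_rpow' (by linarith))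
        intervalIntegrable_const,
      integral_rpow (Or.inl (by linarith)), intervalIntegral.integral_const, smul_eq_mul,
      show γ - 1 + 1 = γ from by ring]
    ring
  have hXρ : ρ ^ γ = ρ * ρ ^ (γ - 1) := by
    have h := Real.rpow_add' hr0 (y := 1) (z := γ - 1)
      (by rw [show (1 : ℝ) + (γ - 1) = γ from by ring]; exact hγ0.ne')
    rw [show (1 : ℝ) + (γ - 1) = γ from by ring, Real.rpow_one] at h
    exact h
  have hXs : ρs ^ γ = ρs * ρs ^ (γ - 1) := by
    have h := Real.rpow_add hρs0 1 (γ - 1)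
    rw [show (1 : ℝ) + (γ - 1) = γ from by ring, Real.rpow_one] at h
    exact h
  have hG : A / (γ - 1) * ρ * (ρ ^ (γ - 1) - ρs ^ (γ - 1)) + A * ρs ^ (γ - 1) * (ρs - ρ)
      = (A * γ / (γ - 1)) * ∫ t in ρs..ρ, (t ^ (γ - 1) - ρs ^ (γ - 1)) := by
    rw [hint, hXρ, hXs]
    field_simp
    ring
  -- bound the integral
  have hIbound : c₁ * (ρ - ρs) ^ 2 / 2 ≤ (∫ t in ρs..ρ, (t ^ (γ - 1) - ρs ^ (γ - 1)))
      ∧ (∫ t in ρs..ρ, (t ^ (γ - 1) - ρs ^ (γ - 1))) ≤ c₂ * (ρ - ρs) ^ 2 / 2 := by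
    have hintg : ∀ u v : ℝ, IntervalIntegrable
        (fun t => t ^ (γ - 1) - ρs ^ (γ - 1)) MeasureTheory.volume u v :=
      fun u v => (intervalIntegral.intervalIntegrable_rpow' (by linarith)).sub
        intervalIntegrable_const
    rcases le_total ρs ρ with h | h
    · constructor
      · rw [← integral_linear₁ c₁ ρs ρ]
        refine intervalIntegral.integral_mono_on h
          ((by fun_prop : Continuous fun t : ℝ => c₁ * (t - ρs)).intervalIntegrable _ _)
          (hintg _ _) ?_
        intro t ht
        have := (slope_aux hp hρlow ρs t hρs0.le ht.1 (hs1.trans ht.1) (ht.2.trans hrM)).1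
        simpa [mul_comm] using this
      · rw [← integral_linear₁ c₂ ρs ρ]
        refine intervalIntegral.integral_mono_on h (hintg _ _)
          ((by fun_prop : Continuous fun t : ℝ => c₂ * (t - ρs)).intervalIntegrable _ _) ?_
        intro t ht
        have := (slope_aux hp hρlow ρs t hρs0.le ht.1 (hs1.trans ht.1) (ht.2.trans hrM)).2
        simpa [mul_comm] using this
    · have hsym : (∫ t in ρs..ρ, (t ^ (γ - 1) - ρs ^ (γ - 1)))
          = ∫ t in ρ..ρs, (ρs ^ (γ - 1) - t ^ (γ - 1)) := by
        rw [intervalIntegral.integral_symm, ← intervalIntegral.integral_neg]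
        simp [neg_sub]
      have hd : (ρ - ρs) ^ 2 = (ρs - ρ) ^ 2 := by ring
      rw [hsym, hd]
      have hintg2 : IntervalIntegrable (fun t => ρs ^ (γ - 1) - t ^ (γ - 1))
          MeasureTheory.volume ρ ρs := by
        rw [show (fun t : ℝ => ρs ^ (γ - 1) - t ^ (γ - 1))
            = -(fun t : ℝ => t ^ (γ - 1) - ρs ^ (γ - 1)) from funext fun t => by simp]
        exact (hintg ρ ρs).neg
      constructor
      · rw [← integral_linear₂ c₁ ρ ρs]
        refine intervalIntegral.integral_mono_on h
          ((by fun_prop : Continuous fun t : ℝ => c₁ * (ρs - t)).intervalIntegrable _ _)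
          hintg2 ?_
        intro t ht
        have := (slope_aux hp hρlow t ρs (hr0.trans ht.1) ht.2 hs1 hρsM).1
        simpa [mul_comm] using this
      · rw [← integral_linear₂ c₂ ρ ρs]
        refine intervalIntegral.integral_mono_on h hintg2
          ((by fun_prop : Continuous fun t : ℝ => c₂ * (ρs - t)).intervalIntegrable _ _) ?_
        intro t ht
        have := (slope_aux hp hρlow t ρs (hr0.trans ht.1) ht.2 hs1 hρsM).2
        simpa [mul_comm] using this
  have hd2 : (0 : ℝ) ≤ (ρ - ρs) ^ 2 := sq_nonneg _
  constructor
  · have h1 : (max K₂ K₁⁻¹)⁻¹ ≤ K₁ := by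
      rw [inv_le_comm₀ (lt_of_lt_of_le hK₂ (le_max_left _ _)) hK₁]
      exact le_max_right _ _
    calc (max K₂ K₁⁻¹)⁻¹ * (ρ - ρs) ^ 2 ≤ K₁ * (ρ - ρs) ^ 2 :=
          mul_le_mul_of_nonneg_right h1 hd2
      _ = (A * γ / (γ - 1)) * (c₁ * (ρ - ρs) ^ 2 / 2) := by
          rw [hK₁def]; field_simp
      _ ≤ (A * γ / (γ - 1)) * ∫ t in ρs..ρ, (t ^ (γ - 1) - ρs ^ (γ - 1)) :=
          mul_le_mul_of_nonneg_left hIbound.1 hco.le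
      _ = _ := hG.symm
  · calc A / (γ - 1) * ρ * (ρ ^ (γ - 1) - ρs ^ (γ - 1)) + A * ρs ^ (γ - 1) * (ρs - ρ)
        = (A * γ / (γ - 1)) * ∫ t in ρs..ρ, (t ^ (γ - 1) - ρs ^ (γ - 1)) := hG
      _ ≤ (A * γ / (γ - 1)) * (c₂ * (ρ - ρs) ^ 2 / 2) :=
          mul_le_mul_of_nonneg_left hIbound.2 hco.le
      _ = K₂ * (ρ - ρs) ^ 2 := by rw [hK₂def]; field_simp
      _ ≤ max K₂ K₁⁻¹ * (ρ - ρs) ^ 2 :=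
          mul_le_mul_of_nonneg_right (le_max_left _ _) hd2
end

section
/- Let U ⊆ ℝ³ × ℝ be open, let ρ : U → ℝ, u : U → ℝ³ and H : U → ℝ³ be continuously differentiable (with u twice continuously differentiable in the spatial variables), let ρ_s : ℝ³ → ℝ be differentiable, and suppose ρ > 0 and ∂_t ρ + div(ρ u) = 0 pointwise on U, where div is the spatial divergence. Let μ > 0, λ ∈ ℝ, A > 0, γ > 1, and set P = A ρ^γ, P̃(x) = A ρ_s(x)^γ, F = (2μ + λ) div u − (P − P̃) − (1/2)|H|², and u̇ = ∂_t u + (u·∇)u. Then on U, ∂_t F = (2μ + λ) div u̇ − (2μ + λ) Σ_{i,j=1}^{3} ∂_i u^j ∂_j u^i − u·∇F + γ P div u + u·∇P̃ − (1/2) u·∇|H|² − H·∂_t H. -/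
/-- Spatial partial derivative `∂_i f` of a function on space-time `ℝ³ × ℝ`. -/
noncomputable def spacePartial (i : Fin 3) (f : ((Fin 3 → ℝ) × ℝ) → ℝ)
    (p : (Fin 3 → ℝ) × ℝ) : ℝ :=
  fderiv ℝ f p (Pi.single i 1, 0)

/-- Time partial derivative `∂_t f` of a function on space-time `ℝ³ × ℝ`. -/
noncomputable def timePartial (f : ((Fin 3 → ℝ) × ℝ) → ℝ)
    (p : (Fin 3 → ℝ) × ℝ) : ℝ :=
  fderiv ℝ f p (0, 1)

/-- second space-time derivative of component `k` of `u` at `p`. -/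
noncomputable def D2 (u : ((Fin 3 → ℝ) × ℝ) → (Fin 3 → ℝ)) (p : (Fin 3 → ℝ) × ℝ)
    (k : Fin 3) : ((Fin 3 → ℝ) × ℝ) →L[ℝ] ((Fin 3 → ℝ) × ℝ) →L[ℝ] ℝ :=
  fderiv ℝ (fun q => fderiv ℝ (fun r => u r k) q) p


set_option maxHeartbeats 2000000 in
/-- The identity for the time derivative of the effective viscous flux
`F = (2μ+λ) div u − (P − P̃) − |H|²/2` (see the computation after (3.35)):
`F_t = (2μ+λ) div u̇ − (2μ+λ) ∂_i u^j ∂_j u^i − u·∇F + γ P div u + u·∇P̃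
       − (1/2) u·∇|H|² − H·H_t`. -/
theorem effective_viscous_flux_time_derivative
    (U : Set ((Fin 3 → ℝ) × ℝ)) (hU : IsOpen U)
    (ρ : ((Fin 3 → ℝ) × ℝ) → ℝ)
    (u H : ((Fin 3 → ℝ) × ℝ) → (Fin 3 → ℝ))
    (ρs : (Fin 3 → ℝ) → ℝ)
    (hρ : ContDiffOn ℝ 1 ρ U) (hu : ContDiffOn ℝ 2 u U) (hH : ContDiffOn ℝ 1 H U)
    (hρs : Differentiable ℝ ρs)
    (hρpos : ∀ p ∈ U, 0 < ρ p)
    (hcontinuity : ∀ p ∈ U,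
      timePartial ρ p + ∑ i : Fin 3, spacePartial i (fun q => ρ q * u q i) p = 0)
    (μ lam A γ : ℝ) (hμ : 0 < μ) (hA : 0 < A) (hγ : 1 < γ)
    (P Ptil F : ((Fin 3 → ℝ) × ℝ) → ℝ)
    (udot : ((Fin 3 → ℝ) × ℝ) → (Fin 3 → ℝ))
    (hP : ∀ q, P q = A * ρ q ^ γ)
    (hPtil : ∀ q, Ptil q = A * ρs q.1 ^ γ)
    (hF : ∀ q, F q = (2 * μ + lam) * (∑ i : Fin 3, spacePartial i (fun r => u r i) q)
        - (P q - Ptil q) - (1 / 2) * ∑ k : Fin 3, (H q k) ^ 2)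
    (hudot : ∀ q, ∀ k : Fin 3, udot q k =
        timePartial (fun r => u r k) q
          + ∑ i : Fin 3, u q i * spacePartial i (fun r => u r k) q) :
    ∀ p ∈ U,
      timePartial F p =
        (2 * μ + lam) * (∑ k : Fin 3, spacePartial k (fun q => udot q k) p)
          - (2 * μ + lam) *
              (∑ i : Fin 3, ∑ j : Fin 3,
                spacePartial i (fun r => u r j) p * spacePartial j (fun r => u r i) p)
          - (∑ i : Fin 3, u p i * spacePartial i F p)
          + γ * P p * (∑ i : Fin 3, spacePartial i (fun r => u r i) p)
          + (∑ i : Fin 3, u p i * spacePartial i Ptil p)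
          - (1 / 2) *
              (∑ i : Fin 3,
                u p i * spacePartial i (fun q => ∑ k : Fin 3, (H q k) ^ 2) p)
          - ∑ k : Fin 3, H p k * timePartial (fun q => H q k) p := by
  intro p hp
  have hpU : U ∈ nhds p := hU.mem_nhds hp
  have huk : ∀ k : Fin 3, ContDiffOn ℝ 2 (fun q => u q k) U := fun k => contDiffOn_pi.mp hu k
  have hukd : ∀ k : Fin 3, HasFDerivAt (fun r => u r k) (fderiv ℝ (fun r => u r k) p) p :=
    fun k => (((huk k).differentiableOn (by norm_num)).differentiableAt hpU).hasFDerivAt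
  have hgd : ∀ (k : Fin 3), ∀ q ∈ U,
      HasFDerivAt (fun r => u r k) (fderiv ℝ (fun r => u r k) q) q :=
    fun k q hq =>
      (((huk k).differentiableOn (by norm_num)).differentiableAt (hU.mem_nhds hq)).hasFDerivAt
  have hgC : ∀ k : Fin 3, ContDiffOn ℝ 1 (fun q => fderiv ℝ (fun r => u r k) q) U :=
    fun k => (huk k).fderiv_of_isOpen hU (by norm_num)
  have hD2 : ∀ k : Fin 3, HasFDerivAt (fun q => fderiv ℝ (fun r => u r k) q) (D2 u p k) p :=
    fun k => (((hgC k).differentiableOn one_ne_zero).differentiableAt hpU).hasFDerivAt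
  have hsymm : ∀ (k : Fin 3) v w, D2 u p k v w = D2 u p k w v := fun k v w =>
    second_derivative_symmetric_of_eventually (Filter.eventually_of_mem hpU (hgd k)) (hD2 k) v w
  have hsp : ∀ (j : Fin 3) (v : (Fin 3 → ℝ) × ℝ),
      HasFDerivAt (fun q => fderiv ℝ (fun r => u r j) q v)
        ((ContinuousLinearMap.apply ℝ ℝ v).comp (D2 u p j)) p :=
    fun j v => ((ContinuousLinearMap.apply ℝ ℝ v).hasFDerivAt).comp p (hD2 j)
  -- density and pressure
  have hρd : HasFDerivAt ρ (fderiv ℝ ρ p) p :=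
    ((hρ.differentiableOn one_ne_zero).differentiableAt hpU).hasFDerivAt
  have hPd : HasFDerivAt P ((A * (γ * ρ p ^ (γ - 1))) • fderiv ℝ ρ p) p := by
    rw [funext hP]
    simpa [smul_smul] using (hρd.rpow_const (Or.inl (hρpos p hp).ne')).const_mul A
  have hρsd : HasFDerivAt (fun q : (Fin 3 → ℝ) × ℝ => ρs q.1)
      ((fderiv ℝ ρs p.1).comp (ContinuousLinearMap.fst ℝ (Fin 3 → ℝ) ℝ)) p :=
    (hρs p.1).hasFDerivAt.comp p hasFDerivAt_fst
  have hPtd : HasFDerivAt Ptil ((A * (γ * ρs p.1 ^ (γ - 1))) •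
      ((fderiv ℝ ρs p.1).comp (ContinuousLinearMap.fst ℝ (Fin 3 → ℝ) ℝ))) p := by
    rw [funext hPtil]
    simpa [smul_smul] using (hρsd.rpow_const (Or.inr hγ.le)).const_mul A
  -- magnetic field
  have hHkd : ∀ k : Fin 3, HasFDerivAt (fun q => H q k) (fderiv ℝ (fun q => H q k) p) p :=
    fun k => (((contDiffOn_pi.mp hH k).differentiableOn one_ne_zero).differentiableAt hpU).hasFDerivAt
  have hH2 : HasFDerivAt (fun q => ∑ k : Fin 3, (H q k) ^ 2)
      (∑ k : Fin 3, (2 * H p k) • fderiv ℝ (fun q => H q k) p) p := by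
    refine HasFDerivAt.fun_sum fun k _ => ?_
    have h1 : (fun q : (Fin 3 → ℝ) × ℝ => (H q k) ^ 2) = fun q => H q k * H q k := by
      funext q; ring
    rw [h1, two_mul, add_smul]
    exact (hHkd k).fun_mul (hHkd k)
  -- divergence of u
  have hdivu : HasFDerivAt (fun q => ∑ i : Fin 3, spacePartial i (fun r => u r i) q)
      (∑ i : Fin 3,
        (ContinuousLinearMap.apply ℝ ℝ ((Pi.single i 1 : Fin 3 → ℝ), (0 : ℝ))).comp (D2 u p i))
      p := by
    simp only [spacePartial]
    exact HasFDerivAt.fun_sum fun i _ => hsp i _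
  -- F
  have HFd : HasFDerivAt F
      ((2 * μ + lam) • (∑ i : Fin 3,
          (ContinuousLinearMap.apply ℝ ℝ ((Pi.single i 1 : Fin 3 → ℝ), (0 : ℝ))).comp (D2 u p i))
        - ((A * (γ * ρ p ^ (γ - 1))) • fderiv ℝ ρ p
            - (A * (γ * ρs p.1 ^ (γ - 1))) •
                ((fderiv ℝ ρs p.1).comp (ContinuousLinearMap.fst ℝ (Fin 3 → ℝ) ℝ)))
        - (1 / 2 : ℝ) • (∑ k : Fin 3, (2 * H p k) • fderiv ℝ (fun q => H q k) p)) p := by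
    rw [funext hF]
    exact ((hdivu.const_mul _).sub (hPd.sub hPtd)).sub (hH2.const_mul _)
  -- udot components
  have hud : ∀ k : Fin 3, HasFDerivAt (fun q => udot q k)
      ((ContinuousLinearMap.apply ℝ ℝ ((0 : Fin 3 → ℝ), (1 : ℝ))).comp (D2 u p k)
        + ∑ i : Fin 3,
          (u p i • ((ContinuousLinearMap.apply ℝ ℝ
              ((Pi.single i 1 : Fin 3 → ℝ), (0 : ℝ))).comp (D2 u p k))
            + fderiv ℝ (fun r => u r k) p ((Pi.single i 1 : Fin 3 → ℝ), (0 : ℝ)) •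
                fderiv ℝ (fun r => u r i) p)) p := by
    intro k
    have h1 : (fun q => udot q k) = fun q =>
        fderiv ℝ (fun r => u r k) q ((0 : Fin 3 → ℝ), (1 : ℝ))
          + ∑ i : Fin 3,
              u q i * fderiv ℝ (fun r => u r k) q ((Pi.single i 1 : Fin 3 → ℝ), (0 : ℝ)) := by
      funext q; exact hudot q k
    rw [h1]
    exact (hsp k _).add (HasFDerivAt.fun_sum fun i _ => (hukd i).fun_mul (hsp k _))
  -- rewrite the target
  have hFf := HFd.fderiv
  have hudf := fun k => (hud k).fderiv
  have hPtf := hPtd.fderiv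
  have hH2f := hH2.fderiv
  have hH2e : ∀ v : (Fin 3 → ℝ) × ℝ, fderiv ℝ (fun q : (Fin 3 → ℝ) × ℝ => H q 0 ^ 2 + H q 1 ^ 2 + H q 2 ^ 2) p v
      = 2 * H p 0 * fderiv ℝ (fun q => H q 0) p v + 2 * H p 1 * fderiv ℝ (fun q => H q 1) p v
        + 2 * H p 2 * fderiv ℝ (fun q => H q 2) p v := by
    intro v
    rw [show (fun q : (Fin 3 → ℝ) × ℝ => H q 0 ^ 2 + H q 1 ^ 2 + H q 2 ^ 2)
        = fun q => ∑ k : Fin 3, (H q k) ^ 2 by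
      funext q; rw [Fin.sum_univ_three], hH2f]
    simp [Fin.sum_univ_three, ContinuousLinearMap.add_apply, ContinuousLinearMap.smul_apply,
      smul_eq_mul, mul_assoc]
  -- continuity equation at p
  have hmul : ∀ i : Fin 3, fderiv ℝ (fun q => ρ q * u q i) p
      = ρ p • fderiv ℝ (fun r => u r i) p + u p i • fderiv ℝ ρ p :=
    fun i => (hρd.mul (hukd i)).fderiv
  have hcont := hcontinuity p hp
  simp only [timePartial, spacePartial, hmul, ContinuousLinearMap.add_apply,
    ContinuousLinearMap.smul_apply, smul_eq_mul, Fin.sum_univ_three] at hcont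
  have hkey : ρ p ^ γ = ρ p ^ (γ - 1) * ρ p := by
    have h2 := Real.rpow_add_one (hρpos p hp).ne' (γ - 1)
    rw [show γ - 1 + 1 = γ by ring] at h2
    exact h2
  simp only [timePartial, spacePartial, hFf, hudf, hPtf, hH2e, hP,
    ContinuousLinearMap.add_apply, ContinuousLinearMap.sub_apply,
    ContinuousLinearMap.smul_apply, ContinuousLinearMap.comp_apply,
    ContinuousLinearMap.apply_apply, ContinuousLinearMap.sum_apply,
    ContinuousLinearMap.coe_fst', smul_eq_mul, Fin.sum_univ_three, map_zero,
    Prod.fst_zero]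
  rw [hkey]
  linear_combination
    (2*μ+lam) * hsymm 0 ((0 : Fin 3 → ℝ), (1:ℝ)) (Pi.single 0 1, 0)
    + (2*μ+lam) * hsymm 1 ((0 : Fin 3 → ℝ), (1:ℝ)) (Pi.single 1 1, 0)
    + (2*μ+lam) * hsymm 2 ((0 : Fin 3 → ℝ), (1:ℝ)) (Pi.single 2 1, 0)
    + (2*μ+lam) * u p 1 * hsymm 0 (Pi.single 1 1, 0) (Pi.single 0 1, 0)
    + (2*μ+lam) * u p 2 * hsymm 0 (Pi.single 2 1, 0) (Pi.single 0 1, 0)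
    + (2*μ+lam) * u p 0 * hsymm 1 (Pi.single 0 1, 0) (Pi.single 1 1, 0)
    + (2*μ+lam) * u p 2 * hsymm 1 (Pi.single 2 1, 0) (Pi.single 1 1, 0)
    + (2*μ+lam) * u p 0 * hsymm 2 (Pi.single 0 1, 0) (Pi.single 2 1, 0)
    + (2*μ+lam) * u p 1 * hsymm 2 (Pi.single 1 1, 0) (Pi.single 2 1, 0)
    - (A * (γ * ρ p ^ (γ - 1))) * hcont
end

section
/- Let Ω ⊂ ℝ³ be a bounded measurable set and let θ > 0 be such that the Lebesgue measure of B_R(x) ∩ Ω is at least θ R³ for every x ∈ Ω and every 0 < R ≤ 1, where B_R(x) is the open ball of radius R centered at x. Let t₁ < t₂ with t₂ − t₁ ≤ 1, let K ≥ 0, and let u : Ω × [t₁, t₂] → ℝ³ be continuous, continuously differentiable in t with ∂_t u continuous and bounded on Ω × [t₁, t₂], and suppose: (i) |u(y, t) − u(z, t)| ≤ K |y − z|^{1/2} for all y, z ∈ Ω and all t ∈ [t₁, t₂]; (ii) ∫_{t₁}^{t₂} ∫_Ω |∂_t u(y, t)|² dy dt ≤ K². Then there exists a constant C depending only on θ such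 that |u(x, t₂) − u(x, t₁)| ≤ C K (t₂ − t₁)^{1/8} for every x ∈ Ω. -/
open MeasureTheory

lemma cs_aux {μ : Measure ℝ} [IsFiniteMeasure μ] {f : ℝ → ℝ}
    (h0 : 0 ≤ᵐ[μ] f) (hf : MemLp f (ENNReal.ofReal 2) μ) :
    ∫ t, f t ∂μ ≤ (μ Set.univ).toReal ^ ((1:ℝ)/2) * (∫ t, f t ^ 2 ∂μ) ^ ((1:ℝ)/2) := by
  have hpq : (2:ℝ).HolderConjugate 2 := Real.HolderConjugate.two_two
  have h := integral_mul_le_Lp_mul_Lq_of_nonneg hpq h0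
    (Filter.Eventually.of_forall fun _ => zero_le_one) hf (memLp_const (1:ℝ))
  simp only [mul_one, Real.one_rpow, integral_const, smul_eq_mul] at h
  have h2 : ∀ x : ℝ, x ^ (2:ℝ) = x ^ 2 := fun x => by
    rw [show (2:ℝ) = ((2:ℕ):ℝ) by norm_num, Real.rpow_natCast]
  simp only [h2] at h
  calc ∫ t, f t ∂μ ≤ (∫ a, f a ^ 2 ∂μ) ^ ((1:ℝ)/2) * (μ Set.univ).toReal ^ ((1:ℝ)/2) := h
    _ = (μ Set.univ).toReal ^ ((1:ℝ)/2) * (∫ t, f t ^ 2 ∂μ) ^ ((1:ℝ)/2) := by rw [mul_comm]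

set_option maxHeartbeats 1000000 in
/-- The space-time Hölder estimate (4.2)–(4.4): if `Ω ⊂ ℝ³` is bounded, measurable and
`θ`-regular (`|B_R(x) ∩ Ω| ≥ θ R³` for `x ∈ Ω`, `0 < R ≤ 1`), and `u` is continuous on
`Ω × [t₁,t₂]` (with `t₂ − t₁ ≤ 1`), continuously differentiable in `t` with continuous
bounded time derivative, spatially uniformly Hölder-`1/2` with constant `K`, and
`∫∫ |∂_t u|² ≤ K²`, then `|u(x,t₂) − u(x,t₁)| ≤ C K (t₂ − t₁)^{1/8}` on `Ω`, with `C`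
depending only on `θ`. -/
theorem holder_in_time_from_spatial_holder
    (θ : ℝ) (hθ : 0 < θ) :
    ∃ C : ℝ, 0 < C ∧
      ∀ (Ω : Set (EuclideanSpace ℝ (Fin 3))), MeasurableSet Ω →
        Bornology.IsBounded Ω →
        (∀ x ∈ Ω, ∀ R : ℝ, 0 < R → R ≤ 1 →
          ENNReal.ofReal (θ * R ^ 3) ≤ volume (Metric.ball x R ∩ Ω)) →
        ∀ (t₁ t₂ : ℝ), t₁ < t₂ → t₂ - t₁ ≤ 1 →
        ∀ (K : ℝ), 0 ≤ K →
        ∀ (u ut : EuclideanSpace ℝ (Fin 3) → ℝ → EuclideanSpace ℝ (Fin 3)),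
          ContinuousOn (fun p : EuclideanSpace ℝ (Fin 3) × ℝ => u p.1 p.2)
            (Ω ×ˢ Set.Icc t₁ t₂) →
          (∀ x ∈ Ω, ∀ t ∈ Set.Icc t₁ t₂,
            HasDerivWithinAt (u x) (ut x t) (Set.Icc t₁ t₂) t) →
          ContinuousOn (fun p : EuclideanSpace ℝ (Fin 3) × ℝ => ut p.1 p.2)
            (Ω ×ˢ Set.Icc t₁ t₂) →
          (∃ M : ℝ, ∀ x ∈ Ω, ∀ t ∈ Set.Icc t₁ t₂, ‖ut x t‖ ≤ M) →
          (∀ t ∈ Set.Icc t₁ t₂, ∀ y ∈ Ω, ∀ z ∈ Ω,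
            ‖u y t - u z t‖ ≤ K * ‖y - z‖ ^ ((1 : ℝ) / 2)) →
          (∫ t in t₁..t₂, ∫ y in Ω, ‖ut y t‖ ^ 2) ≤ K ^ 2 →
          ∀ x ∈ Ω, ‖u x t₂ - u x t₁‖ ≤ C * K * (t₂ - t₁) ^ ((1 : ℝ) / 8) := by
  refine ⟨2 + (θ ^ ((1:ℝ)/2))⁻¹, by positivity, ?_⟩
  intro Ω hΩm hΩb hreg t₁ t₂ h12 hΔ1 K hK u ut hu hderiv hutc hbdd hHolder hint x hx
  obtain ⟨M, hM⟩ := hbdd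
  set Δ := t₂ - t₁ with hΔdef
  have hΔ0 : 0 < Δ := sub_pos.2 h12
  set R := Δ ^ ((1:ℝ)/4) with hRdef
  have hR0 : 0 < R := Real.rpow_pos_of_pos hΔ0 _
  have hR1 : R ≤ 1 := Real.rpow_le_one hΔ0.le hΔ1 (by norm_num)
  set A := Metric.ball x R ∩ Ω with hAdef
  have hAm : MeasurableSet A := measurableSet_ball.inter hΩm
  have hAsub : A ⊆ Ω := Set.inter_subset_right
  have hΩfin : volume Ω < ⊤ := hΩb.measure_lt_top
  have hAfin : volume A < ⊤ := lt_of_le_of_lt (measure_mono hAsub) hΩfin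
  set a := (volume A).toReal with hadef
  have haθ : θ * R ^ 3 ≤ a := by
    have h1 := ENNReal.toReal_mono hAfin.ne (hreg x hx R hR0 hR1)
    rwa [ENNReal.toReal_ofReal (by positivity)] at h1
  have ha0 : 0 < a := lt_of_lt_of_le (by positivity) haθ
  have hM0 : 0 ≤ M := (norm_nonneg _).trans (hM x hx t₁ ⟨le_rfl, h12.le⟩)
  haveI hfinIoc : IsFiniteMeasure (volume.restrict (Set.Ioc t₁ t₂)) :=
    ⟨by rw [Measure.restrict_apply_univ]; exact measure_Ioc_lt_top⟩
  haveI : IsFiniteMeasure (volume.restrict A) :=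
    ⟨by rwa [Measure.restrict_apply_univ]⟩
  haveI : IsFiniteMeasure (volume.restrict Ω) :=
    ⟨by rwa [Measure.restrict_apply_univ]⟩
  -- product integrability (t, y) order
  have hprod : ∀ S : Set (EuclideanSpace ℝ (Fin 3)), MeasurableSet S → S ⊆ Ω →
      Integrable (fun p : ℝ × EuclideanSpace ℝ (Fin 3) => ‖ut p.2 p.1‖ ^ 2)
        ((volume.restrict (Set.Ioc t₁ t₂)).prod (volume.restrict S)) := by
    intro S hSm hSsub
    rw [Measure.prod_restrict]
    have hmeas : MeasurableSet (Set.Ioc t₁ t₂ ×ˢ S) := measurableSet_Ioc.prod hSm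
    have hcont : ContinuousOn (fun p : ℝ × EuclideanSpace ℝ (Fin 3) => ‖ut p.2 p.1‖ ^ 2)
        (Set.Ioc t₁ t₂ ×ˢ S) := by
      refine ((hutc.comp continuous_swap.continuousOn ?_).norm.pow 2)
      exact fun p hp => ⟨hSsub hp.2, Set.Ioc_subset_Icc_self hp.1⟩
    haveI : IsFiniteMeasure (((volume : Measure ℝ).prod volume).restrict (Set.Ioc t₁ t₂ ×ˢ S)) := by
      refine ⟨?_⟩
      rw [Measure.restrict_apply_univ, Measure.prod_prod]
      exact ENNReal.mul_lt_top measure_Ioc_lt_top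
        (lt_of_le_of_lt (measure_mono hSsub) hΩfin)
    refine Integrable.mono' (integrable_const (M ^ 2)) (hcont.aestronglyMeasurable hmeas) ?_
    rw [ae_restrict_iff' hmeas]
    refine Filter.Eventually.of_forall fun p hp => ?_
    have := hM p.2 (hSsub hp.2) p.1 (Set.Ioc_subset_Icc_self hp.1)
    simpa using pow_le_pow_left₀ (norm_nonneg _) this 2
  -- product integrability (y, t) order on A
  have hprod' : Integrable (fun p : EuclideanSpace ℝ (Fin 3) × ℝ => ‖ut p.1 p.2‖ ^ 2)
      ((volume.restrict A).prod (volume.restrict (Set.Ioc t₁ t₂))) := by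
    rw [Measure.prod_restrict]
    have hmeas : MeasurableSet (A ×ˢ Set.Ioc t₁ t₂) := hAm.prod measurableSet_Ioc
    have hcont : ContinuousOn (fun p : EuclideanSpace ℝ (Fin 3) × ℝ => ‖ut p.1 p.2‖ ^ 2)
        (A ×ˢ Set.Ioc t₁ t₂) :=
      (hutc.mono (Set.prod_mono hAsub Set.Ioc_subset_Icc_self)).norm.pow 2
    haveI : IsFiniteMeasure (((volume : Measure (EuclideanSpace ℝ (Fin 3))).prod
        (volume : Measure ℝ)).restrict (A ×ˢ Set.Ioc t₁ t₂)) := by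
      refine ⟨?_⟩
      rw [Measure.restrict_apply_univ, Measure.prod_prod]
      exact ENNReal.mul_lt_top hAfin measure_Ioc_lt_top
    refine Integrable.mono' (integrable_const (M ^ 2)) (hcont.aestronglyMeasurable hmeas) ?_
    rw [ae_restrict_iff' hmeas]
    refine Filter.Eventually.of_forall fun p hp => ?_
    have := hM p.1 (hAsub hp.1) p.2 (Set.Ioc_subset_Icc_self hp.2)
    simpa using pow_le_pow_left₀ (norm_nonneg _) this 2
  -- key bound
  have hhint : IntegrableOn (fun y => ∫ t in Set.Ioc t₁ t₂, ‖ut y t‖ ^ 2) A :=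
    hprod'.integral_prod_left
  have key : (∫ y in A, ∫ t in Set.Ioc t₁ t₂, ‖ut y t‖ ^ 2) ≤ K ^ 2 := by
    have swap1 : (∫ t in Set.Ioc t₁ t₂, ∫ y in A, ‖ut y t‖ ^ 2)
        = ∫ y in A, ∫ t in Set.Ioc t₁ t₂, ‖ut y t‖ ^ 2 :=
      integral_integral_swap (f := fun t y => ‖ut y t‖ ^ 2) (hprod A hAm hAsub)
    rw [← swap1]
    have hIntΩt : ∀ t ∈ Set.Ioc t₁ t₂, IntegrableOn (fun y => ‖ut y t‖ ^ 2) Ω := by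
      intro t ht
      have hc0 : ContinuousOn (fun y => ut y t) Ω := by
        have h' := hutc.comp (f := fun y : EuclideanSpace ℝ (Fin 3) => (y, t))
          (Continuous.continuousOn (continuous_id.prodMk continuous_const))
          (fun y hy => ⟨hy, Set.Ioc_subset_Icc_self ht⟩)
        exact h'
      have hc : ContinuousOn (fun y => ‖ut y t‖ ^ 2) Ω := hc0.norm.pow 2
      refine Integrable.mono' (integrable_const (M ^ 2)) (hc.aestronglyMeasurable hΩm) ?_
      rw [ae_restrict_iff' hΩm]
      refine Filter.Eventually.of_forall fun y hy => ?_
      simpa using pow_le_pow_left₀ (norm_nonneg _) (hM y hy t (Set.Ioc_subset_Icc_self ht)) 2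
    calc (∫ t in Set.Ioc t₁ t₂, ∫ y in A, ‖ut y t‖ ^ 2)
        ≤ ∫ t in Set.Ioc t₁ t₂, ∫ y in Ω, ‖ut y t‖ ^ 2 := by
          refine setIntegral_mono_on ((hprod A hAm hAsub).integral_prod_left)
            ((hprod Ω hΩm subset_rfl).integral_prod_left) measurableSet_Ioc ?_
          intro t ht
          exact setIntegral_mono_set (hIntΩt t ht)
            (Filter.Eventually.of_forall fun y => by positivity) hAsub.eventuallyLE
      _ = ∫ t in t₁..t₂, ∫ y in Ω, ‖ut y t‖ ^ 2 := (intervalIntegral.integral_of_le h12.le).symm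
      _ ≤ K ^ 2 := hint
  -- epsilon step
  have main : ∀ ε : ℝ, 0 < ε → ‖u x t₂ - u x t₁‖
      ≤ 2 * K * Δ ^ ((1:ℝ)/8) + Δ ^ ((1:ℝ)/2) * (K ^ 2 / a + ε) ^ ((1:ℝ)/2) := by
    intro ε hε
    have hy_ex : ∃ y ∈ A, (∫ t in Set.Ioc t₁ t₂, ‖ut y t‖ ^ 2) < K ^ 2 / a + ε := by
      by_contra hcon
      push_neg at hcon
      have h1 := setIntegral_ge_of_const_le_real hAm hAfin.ne hcon hhint
      have h2 : (K ^ 2 / a + ε) * a = K ^ 2 + ε * a := by field_simp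
      rw [measureReal_def, ← hadef, h2] at h1
      nlinarith
    obtain ⟨y, hyA, hyh⟩ := hy_ex
    have hyΩ : y ∈ Ω := hAsub hyA
    have hxy : ‖x - y‖ ^ ((1:ℝ)/2) ≤ Δ ^ ((1:ℝ)/8) := by
      have h1 : ‖x - y‖ ≤ R := by
        have := Metric.mem_ball.1 hyA.1
        rw [dist_eq_norm] at this
        rw [norm_sub_rev]
        exact this.le
      calc ‖x - y‖ ^ ((1:ℝ)/2) ≤ R ^ ((1:ℝ)/2) :=
            Real.rpow_le_rpow (norm_nonneg _) h1 (by norm_num)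
        _ = Δ ^ ((1:ℝ)/8) := by
            rw [hRdef, ← Real.rpow_mul hΔ0.le]; norm_num
    have hsp : ∀ t ∈ Set.Icc t₁ t₂, ‖u x t - u y t‖ ≤ K * Δ ^ ((1:ℝ)/8) := fun t ht =>
      (hHolder t ht x hx y hyΩ).trans (mul_le_mul_of_nonneg_left hxy hK)
    have hucont : ContinuousOn (u y) (Set.Icc t₁ t₂) := fun t ht =>
      (hderiv y hyΩ t ht).continuousWithinAt
    have hut_cont : ContinuousOn (fun t => ut y t) (Set.Icc t₁ t₂) := by
      have h' := hutc.comp (f := fun t : ℝ => (y, t))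
        (Continuous.continuousOn (continuous_const.prodMk continuous_id))
        (fun t ht => ⟨hyΩ, ht⟩)
      exact h'
    have hutii : IntervalIntegrable (fun t => ut y t) volume t₁ t₂ :=
      ContinuousOn.intervalIntegrable (by rwa [Set.uIcc_of_le h12.le])
    have hftc : (∫ t in t₁..t₂, ut y t) = u y t₂ - u y t₁ :=
      intervalIntegral.integral_eq_sub_of_hasDeriv_right_of_le h12.le hucont
        (fun t ht => ((hderiv y hyΩ t (Set.mem_Icc_of_Ioo ht)).hasDerivAt
          (Icc_mem_nhds ht.1 ht.2)).hasDerivWithinAt) hutii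
    have hnorm : ‖u y t₂ - u y t₁‖ ≤ ∫ t in Set.Ioc t₁ t₂, ‖ut y t‖ := by
      rw [← hftc]
      refine (intervalIntegral.norm_integral_le_integral_norm h12.le).trans_eq ?_
      rw [intervalIntegral.integral_of_le h12.le]
    have hmem : MemLp (fun t => ‖ut y t‖) (ENNReal.ofReal 2)
        (volume.restrict (Set.Ioc t₁ t₂)) := by
      refine MemLp.of_bound ((hut_cont.norm.mono Set.Ioc_subset_Icc_self).aestronglyMeasurable
        measurableSet_Ioc) M ?_
      rw [ae_restrict_iff' measurableSet_Ioc]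
      exact Filter.Eventually.of_forall fun t ht => by
        simpa using hM y hyΩ t (Set.Ioc_subset_Icc_self ht)
    have hcs := cs_aux (Filter.Eventually.of_forall fun t => norm_nonneg _) hmem
    have hμuniv : ((volume.restrict (Set.Ioc t₁ t₂)) Set.univ).toReal = Δ := by
      rw [Measure.restrict_apply_univ, Real.volume_Ioc, ENNReal.toReal_ofReal hΔ0.le]
    rw [hμuniv] at hcs
    have hterm2 : ‖u y t₂ - u y t₁‖ ≤ Δ ^ ((1:ℝ)/2) * (K ^ 2 / a + ε) ^ ((1:ℝ)/2) := by
      refine hnorm.trans (hcs.trans ?_)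
      refine mul_le_mul_of_nonneg_left ?_ (Real.rpow_nonneg hΔ0.le _)
      exact Real.rpow_le_rpow (integral_nonneg fun t => by positivity) hyh.le (by norm_num)
    have tri : ‖u x t₂ - u x t₁‖
        ≤ ‖u x t₂ - u y t₂‖ + ‖u y t₂ - u y t₁‖ + ‖u y t₁ - u x t₁‖ := by
      have heq : u x t₂ - u x t₁
          = (u x t₂ - u y t₂) + (u y t₂ - u y t₁) + (u y t₁ - u x t₁) := by abel
      rw [heq]; exact norm_add₃_le
    have h3 : ‖u y t₁ - u x t₁‖ ≤ K * Δ ^ ((1:ℝ)/8) := by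
      rw [norm_sub_rev]; exact hsp t₁ ⟨le_rfl, h12.le⟩
    have h2 := hsp t₂ ⟨h12.le, le_rfl⟩
    nlinarith [hterm2, tri]
  -- pass to the limit ε → 0⁺
  have hfin : ‖u x t₂ - u x t₁‖
      ≤ 2 * K * Δ ^ ((1:ℝ)/8) + Δ ^ ((1:ℝ)/2) * (K ^ 2 / a + 0) ^ ((1:ℝ)/2) := by
    have hlim : Filter.Tendsto
        (fun ε : ℝ => 2 * K * Δ ^ ((1:ℝ)/8) + Δ ^ ((1:ℝ)/2) * (K ^ 2 / a + ε) ^ ((1:ℝ)/2))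
        (nhdsWithin 0 (Set.Ioi 0))
        (nhds (2 * K * Δ ^ ((1:ℝ)/8) + Δ ^ ((1:ℝ)/2) * (K ^ 2 / a + 0) ^ ((1:ℝ)/2))) := by
      have h1 : Filter.Tendsto (fun ε : ℝ => K ^ 2 / a + ε) (nhdsWithin 0 (Set.Ioi 0))
          (nhds (K ^ 2 / a + 0)) :=
        ((continuous_const.add continuous_id).tendsto 0).mono_left nhdsWithin_le_nhds
      have h2 : ContinuousAt (fun z : ℝ => z ^ ((1:ℝ)/2)) (K ^ 2 / a + 0) :=
        Real.continuousAt_rpow_const _ _ (Or.inr (by norm_num))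
      exact Filter.Tendsto.const_add _ (Filter.Tendsto.const_mul _ (h2.tendsto.comp h1))
    refine ge_of_tendsto hlim ?_
    filter_upwards [self_mem_nhdsWithin] with ε hε
    exact main ε hε
  -- final algebra
  have hsqrt : (K ^ 2 / a + 0) ^ ((1:ℝ)/2) = K / a ^ ((1:ℝ)/2) := by
    rw [add_zero, Real.div_rpow (by positivity) ha0.le]
    congr 1
    rw [← Real.rpow_natCast K 2, ← Real.rpow_mul hK]
    norm_num
  have hR3 : R ^ 3 = Δ ^ ((3:ℝ)/4) := by
    rw [← Real.rpow_natCast R 3, hRdef, ← Real.rpow_mul hΔ0.le]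
    norm_num
  have ha12 : θ ^ ((1:ℝ)/2) * Δ ^ ((3:ℝ)/8) ≤ a ^ ((1:ℝ)/2) := by
    calc θ ^ ((1:ℝ)/2) * Δ ^ ((3:ℝ)/8)
        = (θ * Δ ^ ((3:ℝ)/4)) ^ ((1:ℝ)/2) := by
          rw [Real.mul_rpow hθ.le (Real.rpow_nonneg hΔ0.le _), ← Real.rpow_mul hΔ0.le]
          norm_num
      _ ≤ a ^ ((1:ℝ)/2) := by
          refine Real.rpow_le_rpow (by positivity) ?_ (by norm_num)
          rw [← hR3]; exact haθ
  have hθΔpos : 0 < θ ^ ((1:ℝ)/2) * Δ ^ ((3:ℝ)/8) := by positivity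
  have hstep : Δ ^ ((1:ℝ)/2) * (K / a ^ ((1:ℝ)/2))
      ≤ (θ ^ ((1:ℝ)/2))⁻¹ * K * Δ ^ ((1:ℝ)/8) := by
    have h1 : K / a ^ ((1:ℝ)/2) ≤ K / (θ ^ ((1:ℝ)/2) * Δ ^ ((3:ℝ)/8)) :=
      div_le_div_of_nonneg_left hK hθΔpos ha12
    have hΔsplit : Δ ^ ((1:ℝ)/2) = Δ ^ ((3:ℝ)/8) * Δ ^ ((1:ℝ)/8) := by
      rw [← Real.rpow_add hΔ0]; norm_num
    have hθne : θ ^ ((1:ℝ)/2) ≠ 0 := by positivity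
    have hΔne : Δ ^ ((3:ℝ)/8) ≠ 0 := by positivity
    calc Δ ^ ((1:ℝ)/2) * (K / a ^ ((1:ℝ)/2))
        ≤ Δ ^ ((1:ℝ)/2) * (K / (θ ^ ((1:ℝ)/2) * Δ ^ ((3:ℝ)/8))) :=
          mul_le_mul_of_nonneg_left h1 (Real.rpow_nonneg hΔ0.le _)
      _ = (θ ^ ((1:ℝ)/2))⁻¹ * K * Δ ^ ((1:ℝ)/8) := by
          rw [hΔsplit]; field_simp
  calc ‖u x t₂ - u x t₁‖
      ≤ 2 * K * Δ ^ ((1:ℝ)/8) + Δ ^ ((1:ℝ)/2) * (K ^ 2 / a + 0) ^ ((1:ℝ)/2) := hfin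
    _ = 2 * K * Δ ^ ((1:ℝ)/8) + Δ ^ ((1:ℝ)/2) * (K / a ^ ((1:ℝ)/2)) := by rw [hsqrt]
    _ ≤ 2 * K * Δ ^ ((1:ℝ)/8) + (θ ^ ((1:ℝ)/2))⁻¹ * K * Δ ^ ((1:ℝ)/8) := by linarith
    _ = (2 + (θ ^ ((1:ℝ)/2))⁻¹) * K * Δ ^ ((1:ℝ)/8) := by ring
end
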